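/- Let N and k be positive integers, let w : Fin N → Fin N → ℝ be a symmetric matrix with all entries in {0,1}, zero diagonal, and every row sum equal to k, let i : Fin N, and let f : Fin N → ℝ satisfy f j > 0 for all j and f j ≤ f i for all j. Then (1/N²)·(1 − (f i)/((f i) + Σ_j (w i j)·(f j))) − (1/N²)·Σ_j (w i j)·((f i)/((f j) + Σ_l (w j l)·(f l))) ≤ 0. Moreover, if additionally f j < f i for every j with w i j = 1, then the inequality is strict. -/

import Mathlib

/-- In the imitation process with a single defector of maximal
fitness at vertex `i`, the expected change in the frequency of cooperators is
nonpositive, and strictly negative if all of the defector's neighbors have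
strictly smaller fitness. -/
theorem imitation_lone_defector_change (N k : ℕ) (hN : 0 < N) (hk : 0 < k)
    (w : Fin N → Fin N → ℝ)
    (hsym : ∀ i j, w i j = w j i)
    (h01 : ∀ i j, w i j = 0 ∨ w i j = 1)
    (hdiag : ∀ i, w i i = 0)
    (hrow : ∀ i, ∑ j, w i j = k)
    (i : Fin N) (f : Fin N → ℝ)
    (hfpos : ∀ j, 0 < f j) (hfle : ∀ j, f j ≤ f i) :
    ((1 / ((N : ℝ) ^ 2)) * (1 - f i / (f i + ∑ j, w i j * f j))
        - (1 / ((N : ℝ) ^ 2)) * ∑ j, w i j * (f i / (f j + ∑ l, w j l * f l))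
      ≤ 0) ∧
    ((∀ j, w i j = 1 → f j < f i) →
      (1 / ((N : ℝ) ^ 2)) * (1 - f i / (f i + ∑ j, w i j * f j))
        - (1 / ((N : ℝ) ^ 2)) * ∑ j, w i j * (f i / (f j + ∑ l, w j l * f l))
      < 0) := by
  have hfi : 0 < f i := hfpos i
  have hc : 0 < 1 / ((N : ℝ) ^ 2) := by positivity
  have hkpos : (0 : ℝ) < (k : ℝ) := by exact_mod_cast hk
  have hk1 : (0 : ℝ) < (k : ℝ) + 1 := by linarith
  have hwnn : ∀ a b, 0 ≤ w a b := by
    intro a b; rcases h01 a b with h | h <;> rw [h] <;> norm_num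
  have hSnn : ∀ a, 0 ≤ ∑ l, w a l * f l := by
    intro a
    exact Finset.sum_nonneg fun l _ => mul_nonneg (hwnn a l) (hfpos l).le
  have hSle : ∀ a, ∑ l, w a l * f l ≤ (k : ℝ) * f i := by
    intro a
    calc ∑ l, w a l * f l ≤ ∑ l, w a l * f i :=
          Finset.sum_le_sum fun l _ =>
            mul_le_mul_of_nonneg_left (hfle l) (hwnn a l)
      _ = (∑ l, w a l) * f i := by rw [Finset.sum_mul]
      _ = (k : ℝ) * f i := by rw [hrow a]
  have hden : ∀ j : Fin N, 0 < f j + ∑ l, w j l * f l := by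
    intro j; have := hfpos j; have := hSnn j; linarith
  -- second-sum lower bound
  have hB : (k : ℝ) / ((k : ℝ) + 1)
      ≤ ∑ j, w i j * (f i / (f j + ∑ l, w j l * f l)) := by
    have hterm : ∀ j : Fin N, w i j * (1 / ((k : ℝ) + 1))
        ≤ w i j * (f i / (f j + ∑ l, w j l * f l)) := by
      intro j
      refine mul_le_mul_of_nonneg_left ?_ (hwnn i j)
      rw [div_le_div_iff₀ hk1 (hden j)]
      have h1 := hSle j
      have h2 := hfle j
      nlinarith
    calc (k : ℝ) / ((k : ℝ) + 1) = ∑ j, w i j * (1 / ((k : ℝ) + 1)) := by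
          rw [← Finset.sum_mul, hrow i]; ring
      _ ≤ _ := Finset.sum_le_sum fun j _ => hterm j
  have hdenI : 0 < f i + ∑ j, w i j * f j := by
    have := hSnn i; linarith
  constructor
  · have hA : 1 / ((k : ℝ) + 1) ≤ f i / (f i + ∑ j, w i j * f j) := by
      rw [div_le_div_iff₀ hk1 hdenI]
      have := hSle i
      nlinarith
    have h1 : 1 - f i / (f i + ∑ j, w i j * f j) ≤ (k : ℝ) / ((k : ℝ) + 1) := by
      have : (k : ℝ) / ((k : ℝ) + 1) = 1 - 1 / ((k : ℝ) + 1) := by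
        field_simp
        ring
      rw [this]; linarith
    nlinarith [mul_le_mul_of_nonneg_left h1 hc.le,
      mul_le_mul_of_nonneg_left hB hc.le]
  · intro hstrict
    -- there exists a neighbor
    have hex : ∃ j, w i j = 1 := by
      by_contra h
      push_neg at h
      have : ∀ j, w i j = 0 := by
        intro j; rcases h01 i j with h0 | h1
        · exact h0
        · exact absurd h1 (h j)
      have : (∑ j, w i j) = 0 := Finset.sum_eq_zero fun j _ => this j
      rw [hrow i] at this
      exact absurd this (by exact_mod_cast hk.ne')
    obtain ⟨j0, hj0⟩ := hex
    have hSlt : ∑ j, w i j * f j < (k : ℝ) * f i := by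
      have : ∑ j, w i j * f j < ∑ j, w i j * f i := by
        apply Finset.sum_lt_sum
        · exact fun l _ => mul_le_mul_of_nonneg_left (hfle l) (hwnn i l)
        · exact ⟨j0, Finset.mem_univ j0, by
            rw [hj0, one_mul, one_mul]; exact hstrict j0 hj0⟩
      calc ∑ j, w i j * f j < ∑ j, w i j * f i := this
        _ = (k : ℝ) * f i := by rw [← Finset.sum_mul, hrow i]
    have hA : 1 / ((k : ℝ) + 1) < f i / (f i + ∑ j, w i j * f j) := by
      rw [div_lt_div_iff₀ hk1 hdenI]
      nlinarith
    have h1 : 1 - f i / (f i + ∑ j, w i j * f j) < (k : ℝ) / ((k : ℝ) + 1) := by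
      have : (k : ℝ) / ((k : ℝ) + 1) = 1 - 1 / ((k : ℝ) + 1) := by
        field_simp
        ring
      rw [this]; linarith
    nlinarith [mul_lt_mul_of_pos_left h1 hc,
      mul_le_mul_of_nonneg_left hB hc.le]
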